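/- Fix κ > 0 and integers ℓ ≥ 0, |m'| ≤ ℓ. Define B_ℓ^{m'} := ∫₀^∞ [γ_ℓ^{m'} P_ℓ^{m'}(1 + ζ/(2κ))]² ζ^{1/2} e^{-ζ} dζ with γ_ℓ^{m'} = [((2ℓ+1)/(4π))·(ℓ-m')!/(ℓ+m')!]^{1/2}. Then C_ℓ^{m'} ≤ B_ℓ^{m'} ≤ e^{4κ}·C_ℓ^{m'}, where C_ℓ^{m'} := (1/(4π²κ^{2ℓ})) · (2ℓ+1)·Γ(ℓ+1/2)² / ((ℓ+m')!(ℓ-m')!) · Γ(2ℓ+3/2). -/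

import Mathlib

open Finset MeasureTheory

/-- Associated Legendre function on `[1,∞)` (explicit sum formula), for `0 ≤ m ≤ ℓ`. -/
noncomputable def legP (ℓ m : ℕ) (z : ℝ) : ℝ :=
  ((Nat.factorial (ℓ + m) : ℝ) / (2 ^ ℓ * (Nat.factorial ℓ : ℝ))) *
    ∑ k ∈ range (ℓ - m + 1),
      (Nat.choose ℓ k : ℝ) * (Nat.choose ℓ (m + k) : ℝ) *
        (z - 1) ^ ((ℓ : ℝ) - (m : ℝ) / 2 - (k : ℝ)) *
        (z + 1) ^ ((m : ℝ) / 2 + (k : ℝ))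

/-- Associated Legendre function for integer order `m` with `|m| ≤ ℓ`, using
`P_ℓ^{-m} = ((ℓ-m)!/(ℓ+m)!)·P_ℓ^m`. -/
noncomputable def legPZ (ℓ : ℕ) (m : ℤ) (z : ℝ) : ℝ :=
  if 0 ≤ m then legP ℓ m.toNat z
  else ((Nat.factorial (ℓ - m.natAbs) : ℝ) / (Nat.factorial (ℓ + m.natAbs) : ℝ)) *
    legP ℓ m.natAbs z

/-- Spherical-harmonic normalization constant `γ_ℓ^m`. -/
noncomputable def gammaCoeff (ℓ : ℕ) (m : ℤ) : ℝ :=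
  Real.sqrt ((2 * (ℓ : ℝ) + 1) / (4 * Real.pi) *
    (Nat.factorial ((ℓ : ℤ) - m).toNat : ℝ) / (Nat.factorial ((ℓ : ℤ) + m).toNat : ℝ))

lemma choose_sum_id (ℓ m : ℕ) (hm : m ≤ ℓ) :
    ∑ k ∈ range (ℓ - m + 1), ℓ.choose k * ℓ.choose (m + k) = (2 * ℓ).choose (ℓ - m) := by
  rw [two_mul, Nat.add_choose_eq, Finset.Nat.sum_antidiagonal_eq_sum_range_succ_mk]
  refine Finset.sum_congr rfl fun k hk => ?_
  rw [Finset.mem_range] at hk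
  have hk' : k ≤ ℓ - m := Nat.lt_succ_iff.mp hk
  congr 1
  have h1 : m + k ≤ ℓ := by omega
  rw [show ℓ - m - k = ℓ - (m + k) by omega, Nat.choose_symm h1]

lemma legP_bounds (ℓ m : ℕ) (hm : m ≤ ℓ) {z : ℝ} (hz : 1 < z) :
    ((2*ℓ).factorial : ℝ) / (2^ℓ * ℓ.factorial * (ℓ-m).factorial) * (z-1)^ℓ ≤ legP ℓ m z ∧
    legP ℓ m z ≤ ((2*ℓ).factorial : ℝ) / (2^ℓ * ℓ.factorial * (ℓ-m).factorial) * (z+1)^ℓ := by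
  have ha : (0:ℝ) < z - 1 := by linarith
  have hb : (0:ℝ) < z + 1 := by linarith
  have hab : z - 1 ≤ z + 1 := by linarith
  have hcoef : (0:ℝ) ≤ (Nat.factorial (ℓ + m) : ℝ) / (2 ^ ℓ * (Nat.factorial ℓ : ℝ)) := by
    positivity
  -- termwise bounds
  have key : ∀ k ∈ range (ℓ - m + 1),
      ((Nat.choose ℓ k : ℝ) * (Nat.choose ℓ (m + k)) * (z-1)^ℓ ≤
        (Nat.choose ℓ k : ℝ) * (Nat.choose ℓ (m + k)) *
          (z - 1) ^ ((ℓ : ℝ) - (m : ℝ) / 2 - (k : ℝ)) * (z + 1) ^ ((m : ℝ) / 2 + (k : ℝ))) ∧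
      ((Nat.choose ℓ k : ℝ) * (Nat.choose ℓ (m + k)) *
          (z - 1) ^ ((ℓ : ℝ) - (m : ℝ) / 2 - (k : ℝ)) * (z + 1) ^ ((m : ℝ) / 2 + (k : ℝ)) ≤
        (Nat.choose ℓ k : ℝ) * (Nat.choose ℓ (m + k)) * (z+1)^ℓ) := by
    intro k hk
    rw [mem_range, Nat.lt_succ_iff] at hk
    set e1 : ℝ := (ℓ : ℝ) - (m : ℝ) / 2 - (k : ℝ) with he1def
    set e2 : ℝ := (m : ℝ) / 2 + (k : ℝ) with he2def
    have hkr : (k:ℝ) ≤ (ℓ:ℝ) - (m:ℝ) := by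
      have : (k:ℝ) ≤ ((ℓ - m : ℕ):ℝ) := by exact_mod_cast hk
      rwa [Nat.cast_sub hm] at this
    have he1 : 0 ≤ e1 := by
      have hm0 : (0:ℝ) ≤ (m:ℝ) := by positivity
      simp only [he1def]; linarith
    have he2 : 0 ≤ e2 := by positivity
    have hsum : e1 + e2 = (ℓ:ℝ) := by simp only [he1def, he2def]; ring
    have hc : (0:ℝ) ≤ (Nat.choose ℓ k : ℝ) * (Nat.choose ℓ (m + k)) := by positivity
    have hlow : (z-1)^ℓ ≤ (z - 1) ^ e1 * (z + 1) ^ e2 := by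
      calc (z-1)^ℓ = (z-1) ^ ((ℓ:ℝ)) := by rw [Real.rpow_natCast]
        _ = (z-1) ^ e1 * (z-1) ^ e2 := by rw [← Real.rpow_add ha, hsum]
        _ ≤ (z-1) ^ e1 * (z+1) ^ e2 :=
            mul_le_mul_of_nonneg_left (Real.rpow_le_rpow ha.le hab he2) (Real.rpow_nonneg ha.le _)
    have hhigh : (z - 1) ^ e1 * (z + 1) ^ e2 ≤ (z+1)^ℓ := by
      calc (z - 1) ^ e1 * (z + 1) ^ e2 ≤ (z+1) ^ e1 * (z+1) ^ e2 :=
            mul_le_mul_of_nonneg_right (Real.rpow_le_rpow ha.le hab he1) (Real.rpow_nonneg hb.le _)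
        _ = (z+1) ^ ((ℓ:ℝ)) := by rw [← Real.rpow_add hb, hsum]
        _ = (z+1)^ℓ := by rw [Real.rpow_natCast]
    constructor
    · calc (Nat.choose ℓ k : ℝ) * (Nat.choose ℓ (m + k)) * (z-1)^ℓ
          ≤ (Nat.choose ℓ k : ℝ) * (Nat.choose ℓ (m + k)) * ((z - 1) ^ e1 * (z + 1) ^ e2) :=
            mul_le_mul_of_nonneg_left hlow hc
        _ = (Nat.choose ℓ k : ℝ) * (Nat.choose ℓ (m + k)) * (z - 1) ^ e1 * (z + 1) ^ e2 := by ring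
    · calc (Nat.choose ℓ k : ℝ) * (Nat.choose ℓ (m + k)) * (z - 1) ^ e1 * (z + 1) ^ e2
          = (Nat.choose ℓ k : ℝ) * (Nat.choose ℓ (m + k)) * ((z - 1) ^ e1 * (z + 1) ^ e2) := by ring
        _ ≤ (Nat.choose ℓ k : ℝ) * (Nat.choose ℓ (m + k)) * (z+1)^ℓ :=
            mul_le_mul_of_nonneg_left hhigh hc
  -- sum of coefficients
  have hchoose : ∑ k ∈ range (ℓ - m + 1), (Nat.choose ℓ k : ℝ) * (Nat.choose ℓ (m + k)) =
      ((2*ℓ).choose (ℓ - m) : ℝ) := by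
    rw [← choose_sum_id ℓ m hm]; push_cast; ring
  -- constant identity
  have hconst : (Nat.factorial (ℓ + m) : ℝ) / (2 ^ ℓ * (Nat.factorial ℓ : ℝ)) *
      ((2*ℓ).choose (ℓ - m) : ℝ) =
      ((2*ℓ).factorial : ℝ) / (2^ℓ * ℓ.factorial * (ℓ-m).factorial) := by
    have h := Nat.choose_mul_factorial_mul_factorial (show ℓ - m ≤ 2*ℓ by omega)
    have h2 : 2*ℓ - (ℓ - m) = ℓ + m := by omega
    rw [h2] at h
    have hre : ((2*ℓ).choose (ℓ-m) : ℝ) * (ℓ-m).factorial * (ℓ+m).factorial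
        = ((2*ℓ).factorial : ℝ) := by exact_mod_cast congrArg (Nat.cast (R := ℝ)) h
    have hfℓ : ((ℓ.factorial : ℝ)) ≠ 0 := Nat.cast_ne_zero.mpr (Nat.factorial_ne_zero ℓ)
    have hfm : (((ℓ-m).factorial : ℝ)) ≠ 0 := Nat.cast_ne_zero.mpr (Nat.factorial_ne_zero _)
    have hfp : (((ℓ+m).factorial : ℝ)) ≠ 0 := Nat.cast_ne_zero.mpr (Nat.factorial_ne_zero _)
    field_simp
    linear_combination hre
  constructor
  · rw [legP]
    calc ((2*ℓ).factorial : ℝ) / (2^ℓ * ℓ.factorial * (ℓ-m).factorial) * (z-1)^ℓ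
        = (Nat.factorial (ℓ + m) : ℝ) / (2 ^ ℓ * (Nat.factorial ℓ : ℝ)) *
            (∑ k ∈ range (ℓ - m + 1), (Nat.choose ℓ k : ℝ) * (Nat.choose ℓ (m + k)) * (z-1)^ℓ) := by
          rw [← Finset.sum_mul, hchoose, ← mul_assoc, hconst]
      _ ≤ _ := mul_le_mul_of_nonneg_left (Finset.sum_le_sum (fun k hk => (key k hk).1)) hcoef
  · rw [legP]
    calc (Nat.factorial (ℓ + m) : ℝ) / (2 ^ ℓ * (Nat.factorial ℓ : ℝ)) *
          (∑ k ∈ range (ℓ - m + 1), (Nat.choose ℓ k : ℝ) * (Nat.choose ℓ (m + k)) *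
            (z - 1) ^ ((ℓ : ℝ) - (m : ℝ) / 2 - (k : ℝ)) * (z + 1) ^ ((m : ℝ) / 2 + (k : ℝ)))
        ≤ (Nat.factorial (ℓ + m) : ℝ) / (2 ^ ℓ * (Nat.factorial ℓ : ℝ)) *
            (∑ k ∈ range (ℓ - m + 1), (Nat.choose ℓ k : ℝ) * (Nat.choose ℓ (m + k)) * (z+1)^ℓ) :=
          mul_le_mul_of_nonneg_left (Finset.sum_le_sum (fun k hk => (key k hk).2)) hcoef
      _ = _ := by rw [← Finset.sum_mul, hchoose, ← mul_assoc, hconst]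

noncomputable def Dc (ℓ : ℕ) (m' : ℤ) : ℝ :=
  gammaCoeff ℓ m' *
    (if 0 ≤ m' then (1:ℝ)
      else (Nat.factorial (ℓ - m'.natAbs) : ℝ) / (Nat.factorial (ℓ + m'.natAbs) : ℝ)) *
    ((Nat.factorial (2*ℓ) : ℝ) / (2^ℓ * Nat.factorial ℓ * Nat.factorial (ℓ - m'.natAbs)))

lemma gammaCoeff_nonneg (ℓ : ℕ) (m' : ℤ) : 0 ≤ gammaCoeff ℓ m' := Real.sqrt_nonneg _

lemma Dc_nonneg (ℓ : ℕ) (m' : ℤ) : 0 ≤ Dc ℓ m' := by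
  unfold Dc
  have h : (0:ℝ) ≤ (if 0 ≤ m' then (1:ℝ)
      else (Nat.factorial (ℓ - m'.natAbs) : ℝ) / (Nat.factorial (ℓ + m'.natAbs) : ℝ)) := by
    split_ifs <;> positivity
  have := gammaCoeff_nonneg ℓ m'
  positivity

lemma Dc_sq (ℓ : ℕ) (m' : ℤ) (hm : m'.natAbs ≤ ℓ) :
    (Dc ℓ m')^2 = (2*(ℓ:ℝ)+1) * ((Nat.factorial (2*ℓ) : ℝ))^2 /
      (4 * Real.pi * 4^ℓ * ((Nat.factorial ℓ : ℝ))^2 *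
        (Nat.factorial (ℓ + m'.natAbs) : ℝ) * (Nat.factorial (ℓ - m'.natAbs) : ℝ)) := by
  set m := m'.natAbs with hmdef
  have hπ : (0:ℝ) < Real.pi := Real.pi_pos
  have hfℓ : (0:ℝ) < (Nat.factorial ℓ : ℝ) := by exact_mod_cast Nat.factorial_pos ℓ
  have hfm : (0:ℝ) < ((ℓ-m).factorial : ℝ) := by exact_mod_cast Nat.factorial_pos _
  have hfp : (0:ℝ) < ((ℓ+m).factorial : ℝ) := by exact_mod_cast Nat.factorial_pos _
  have h4 : (4:ℝ)^ℓ = 2^ℓ * 2^ℓ := by rw [← mul_pow]; norm_num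
  unfold Dc gammaCoeff
  rcases le_or_gt 0 m' with h | h
  · have h1 : ((ℓ:ℤ) - m').toNat = ℓ - m := by omega
    have h2 : ((ℓ:ℤ) + m').toNat = ℓ + m := by omega
    rw [h1, h2, if_pos h, mul_one, mul_pow, Real.sq_sqrt (by positivity)]
    rw [h4]; field_simp; ring
  · have h1 : ((ℓ:ℤ) - m').toNat = ℓ + m := by omega
    have h2 : ((ℓ:ℤ) + m').toNat = ℓ - m := by omega
    rw [h1, h2, if_neg (not_le.mpr h), mul_pow, mul_pow, Real.sq_sqrt (by positivity)]
    rw [h4]; field_simp; ring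

lemma fact_prod (ℓ : ℕ) (m' : ℤ) (hm : m'.natAbs ≤ ℓ) :
    ((Nat.factorial ((ℓ : ℤ) + m').toNat : ℝ)) * (Nat.factorial ((ℓ : ℤ) - m').toNat : ℝ) =
      ((Nat.factorial (ℓ + m'.natAbs) : ℝ)) * (Nat.factorial (ℓ - m'.natAbs) : ℝ) := by
  rcases le_or_gt 0 m' with h | h
  · have h1 : ((ℓ:ℤ) - m').toNat = ℓ - m'.natAbs := by omega
    have h2 : ((ℓ:ℤ) + m').toNat = ℓ + m'.natAbs := by omega
    rw [h1, h2]
  · have h1 : ((ℓ:ℤ) - m').toNat = ℓ + m'.natAbs := by omega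
    have h2 : ((ℓ:ℤ) + m').toNat = ℓ - m'.natAbs := by omega
    rw [h1, h2, mul_comm]

lemma gamma_half_fact (n : ℕ) :
    Real.Gamma ((n : ℝ) + 1 / 2) =
      Real.sqrt Real.pi * (Nat.factorial (2 * n)) / (4 ^ n * Nat.factorial n) := by
  induction n with
  | zero => rw [show ((0:ℕ):ℝ) + 1/2 = 1/2 by norm_num, Real.Gamma_one_half_eq]; simp
  | succ n ih =>
    have h : ((n : ℝ) + 1) + 1 / 2 = ((n : ℝ) + 1 / 2) + 1 := by ring
    push_cast
    rw [h, Real.Gamma_add_one (by positivity), ih]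
    have : (2 * (n + 1)) = (2 * n + 1) + 1 := by ring
    rw [this, Nat.factorial_succ, Nat.factorial_succ, Nat.factorial_succ]
    push_cast
    have h4 : (4 : ℝ) ^ (n + 1) = 4 * 4 ^ n := by ring
    rw [h4]
    field_simp
    ring

lemma const_id (κ : ℝ) (hκ : 0 < κ) (ℓ : ℕ) (m' : ℤ) (hm : m'.natAbs ≤ ℓ) :
    (1 / (4 * Real.pi ^ 2 * κ ^ (2 * ℓ))) *
      ((2 * (ℓ : ℝ) + 1) * Real.Gamma ((ℓ : ℝ) + 1 / 2) ^ 2 /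
        ((Nat.factorial ((ℓ : ℤ) + m').toNat : ℝ) * (Nat.factorial ((ℓ : ℤ) - m').toNat : ℝ)))
    = (Dc ℓ m')^2 / (2*κ)^(2*ℓ) := by
  have hπ : (0:ℝ) < Real.pi := Real.pi_pos
  have hfℓ : (0:ℝ) < (Nat.factorial ℓ : ℝ) := by exact_mod_cast Nat.factorial_pos ℓ
  have hfm : (0:ℝ) < ((ℓ - m'.natAbs).factorial : ℝ) := by exact_mod_cast Nat.factorial_pos _
  have hfp : (0:ℝ) < ((ℓ + m'.natAbs).factorial : ℝ) := by exact_mod_cast Nat.factorial_pos _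
  have hΓ : Real.Gamma ((ℓ:ℝ) + 1/2)^2 =
      Real.pi * ((Nat.factorial (2*ℓ)):ℝ)^2 / ((4^ℓ)^2 * ((Nat.factorial ℓ):ℝ)^2) := by
    rw [gamma_half_fact, div_pow, mul_pow, Real.sq_sqrt Real.pi_pos.le, mul_pow]
  have h2κ : (2*κ)^(2*ℓ) = (4:ℝ)^ℓ * κ^(2*ℓ) := by
    rw [mul_pow, pow_mul]; norm_num
  rw [fact_prod ℓ m' hm, Dc_sq ℓ m' hm, hΓ, h2κ]
  have h4 : (0:ℝ) < 4^ℓ := by positivity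
  have hκ2 : (0:ℝ) < κ^(2*ℓ) := by positivity
  field_simp

lemma point_bounds (ℓ : ℕ) (m' : ℤ) (hm : m'.natAbs ≤ ℓ) {z : ℝ} (hz : 1 < z) :
    Dc ℓ m' * (z-1)^ℓ ≤ gammaCoeff ℓ m' * legPZ ℓ m' z ∧
    gammaCoeff ℓ m' * legPZ ℓ m' z ≤ Dc ℓ m' * (z+1)^ℓ := by
  have hγ := gammaCoeff_nonneg ℓ m'
  set γ := gammaCoeff ℓ m' with hγdef
  set A : ℝ := ((Nat.factorial (2*ℓ) : ℝ) / (2^ℓ * Nat.factorial ℓ * Nat.factorial (ℓ - m'.natAbs)))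
    with hAdef
  have hB := legP_bounds ℓ m'.natAbs hm hz
  rcases le_or_gt 0 m' with h | h
  · have ht : m'.toNat = m'.natAbs := by omega
    rw [legPZ, if_pos h, ht, Dc, if_pos h, ← hγdef, ← hAdef, mul_one]
    constructor
    · calc γ * A * (z-1)^ℓ = γ * (A * (z-1)^ℓ) := by ring
        _ ≤ γ * legP ℓ m'.natAbs z := mul_le_mul_of_nonneg_left hB.1 hγ
    · calc γ * legP ℓ m'.natAbs z ≤ γ * (A * (z+1)^ℓ) := mul_le_mul_of_nonneg_left hB.2 hγ
        _ = γ * A * (z+1)^ℓ := by ring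
  · have hn : ¬ (0 ≤ m') := not_le.mpr h
    rw [legPZ, if_neg hn, Dc, if_neg hn, ← hγdef, ← hAdef]
    set c : ℝ := (Nat.factorial (ℓ - m'.natAbs) : ℝ) / (Nat.factorial (ℓ + m'.natAbs) : ℝ)
      with hcdef
    have hc : 0 ≤ c := by positivity
    have hγc : 0 ≤ γ * c := mul_nonneg hγ hc
    constructor
    · calc γ * c * A * (z-1)^ℓ = (γ * c) * (A * (z-1)^ℓ) := by ring
        _ ≤ (γ * c) * legP ℓ m'.natAbs z := mul_le_mul_of_nonneg_left hB.1 hγc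
        _ = γ * (c * legP ℓ m'.natAbs z) := by ring
    · calc γ * (c * legP ℓ m'.natAbs z) = (γ * c) * legP ℓ m'.natAbs z := by ring
        _ ≤ (γ * c) * (A * (z+1)^ℓ) := mul_le_mul_of_nonneg_left hB.2 hγc
        _ = γ * c * A * (z+1)^ℓ := by ring

lemma shift_setIntegral (a : ℝ) (f : ℝ → ℝ) :
    ∫ x in Set.Ioi a, f x = ∫ x in Set.Ioi (0:ℝ), f (x + a) := by
  have e : MeasurableEmbedding (fun x : ℝ => x + a) :=
    (Homeomorph.addRight a).isClosedEmbedding.measurableEmbedding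
  have hmap : Measure.map (fun x : ℝ => x + a) volume = volume :=
    map_add_right_eq_self volume a
  have hpre : (fun x : ℝ => x + a) ⁻¹' (Set.Ioi a) = Set.Ioi 0 := by
    ext x; simp
  calc ∫ x in Set.Ioi a, f x
      = ∫ x in Set.Ioi a, f x ∂(Measure.map (fun x : ℝ => x + a) volume) := by rw [hmap]
    _ = ∫ x in (fun x : ℝ => x + a) ⁻¹' (Set.Ioi a), f (x + a) := e.setIntegral_map f _
    _ = ∫ x in Set.Ioi (0:ℝ), f (x + a) := by rw [hpre]

lemma shift_integrableOn (a : ℝ) (f : ℝ → ℝ) (hf : IntegrableOn f (Set.Ioi a)) :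
    IntegrableOn (fun x => f (x + a)) (Set.Ioi (0:ℝ)) := by
  have e : MeasurableEmbedding (fun x : ℝ => x + a) :=
    (Homeomorph.addRight a).isClosedEmbedding.measurableEmbedding
  have hmap : Measure.map (fun x : ℝ => x + a) volume = volume :=
    map_add_right_eq_self volume a
  have hpre : (fun x : ℝ => x + a) ⁻¹' (Set.Ioi a) = Set.Ioi 0 := by
    ext x; simp
  have : volume.restrict (Set.Ioi a) =
      Measure.map (fun x : ℝ => x + a) (volume.restrict (Set.Ioi (0:ℝ))) := by
    rw [← hpre, ← Measure.restrict_map e.measurable measurableSet_Ioi, hmap]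
  rw [IntegrableOn, this, e.integrable_map_iff] at hf
  exact hf

lemma contF (κ : ℝ) (hκ : 0 < κ) (ℓ : ℕ) (m' : ℤ) :
    ContinuousOn (fun ζ : ℝ => (gammaCoeff ℓ m' * legPZ ℓ m' (1 + ζ/(2*κ)))^2 *
      ζ ^ ((1:ℝ)/2) * Real.exp (-ζ)) (Set.Ioi 0) := by
  have hlegP : ∀ m : ℕ, ContinuousOn (fun ζ : ℝ => legP ℓ m (1 + ζ/(2*κ))) (Set.Ioi 0) := by
    intro m
    unfold legP
    refine continuousOn_const.mul (continuousOn_finset_sum _ fun k _ => ?_)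
    refine ContinuousOn.mul (ContinuousOn.mul continuousOn_const ?_) ?_
    · refine ContinuousOn.rpow_const (by fun_prop) fun x hx => Or.inl ?_
      have hx0 : (0:ℝ) < x := hx
      have : (0:ℝ) < 1 + x/(2*κ) - 1 := by
        have : (0:ℝ) < x/(2*κ) := by positivity
        linarith
      exact ne_of_gt this
    · refine ContinuousOn.rpow_const (by fun_prop) fun x hx => Or.inl ?_
      have hx0 : (0:ℝ) < x := hx
      have : (0:ℝ) < 1 + x/(2*κ) + 1 := by positivity
      exact ne_of_gt this
  have hPZ : ContinuousOn (fun ζ : ℝ => legPZ ℓ m' (1 + ζ/(2*κ))) (Set.Ioi 0) := by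
    unfold legPZ
    split_ifs
    · exact hlegP _
    · exact continuousOn_const.mul (hlegP _)
  have hζ : ContinuousOn (fun ζ : ℝ => ζ ^ ((1:ℝ)/2)) (Set.Ioi 0) :=
    ContinuousOn.rpow_const continuousOn_id fun x hx => Or.inl (ne_of_gt hx)
  exact (((continuousOn_const.mul hPZ).pow 2).mul hζ).mul (by fun_prop)


/-- Two-sided bound `C_ℓ^{m'} ≤ B_ℓ^{m'} ≤ e^{4κ}·C_ℓ^{m'}` for the weighted integral
`B_ℓ^{m'} = ∫₀^∞ [γ_ℓ^{m'} P_ℓ^{m'}(1+ζ/(2κ))]² ζ^{1/2} e^{-ζ} dζ`. -/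
theorem herglotz_integral_bounds (κ : ℝ) (hκ : 0 < κ) (ℓ : ℕ) (m' : ℤ)
    (hm : m'.natAbs ≤ ℓ) :
    (1 / (4 * Real.pi ^ 2 * κ ^ (2 * ℓ))) *
        ((2 * (ℓ : ℝ) + 1) * Real.Gamma ((ℓ : ℝ) + 1 / 2) ^ 2 /
          ((Nat.factorial ((ℓ : ℤ) + m').toNat : ℝ) *
            (Nat.factorial ((ℓ : ℤ) - m').toNat : ℝ))) *
        Real.Gamma (2 * (ℓ : ℝ) + 3 / 2) ≤
      ∫ ζ in Set.Ioi (0 : ℝ),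
        (gammaCoeff ℓ m' * legPZ ℓ m' (1 + ζ / (2 * κ))) ^ 2 *
          ζ ^ ((1 : ℝ) / 2) * Real.exp (-ζ) ∧
    (∫ ζ in Set.Ioi (0 : ℝ),
        (gammaCoeff ℓ m' * legPZ ℓ m' (1 + ζ / (2 * κ))) ^ 2 *
          ζ ^ ((1 : ℝ) / 2) * Real.exp (-ζ)) ≤
      Real.exp (4 * κ) *
        ((1 / (4 * Real.pi ^ 2 * κ ^ (2 * ℓ))) *
          ((2 * (ℓ : ℝ) + 1) * Real.Gamma ((ℓ : ℝ) + 1 / 2) ^ 2 /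
            ((Nat.factorial ((ℓ : ℤ) + m').toNat : ℝ) *
              (Nat.factorial ((ℓ : ℤ) - m').toNat : ℝ))) *
          Real.Gamma (2 * (ℓ : ℝ) + 3 / 2)) := by
  have hDc := Dc_nonneg ℓ m'
  set p : ℝ := 2*(ℓ:ℝ) + 1/2 with hpdef
  set c' : ℝ := (Dc ℓ m')^2 / (2*κ)^(2*ℓ) with hc'def
  set G : ℝ → ℝ := fun x => Real.exp (-x) * x ^ p with hGdef
  set F : ℝ → ℝ := fun ζ => (gammaCoeff ℓ m' * legPZ ℓ m' (1 + ζ / (2 * κ))) ^ 2 *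
      ζ ^ ((1 : ℝ) / 2) * Real.exp (-ζ) with hFdef
  have hc'nn : (0:ℝ) ≤ c' := by positivity
  have hs32 : (0:ℝ) < 2*(ℓ:ℝ) + 3/2 := by positivity
  have hexp1 : (2*(ℓ:ℝ) + 3/2) - 1 = p := by rw [hpdef]; ring
  have hGi : IntegrableOn G (Set.Ioi (0:ℝ)) := by
    have := Real.GammaIntegral_convergent hs32
    rwa [hexp1] at this
  have hΓ : Real.Gamma (2*(ℓ:ℝ) + 3/2) = ∫ x in Set.Ioi (0:ℝ), G x := by
    rw [Real.Gamma_eq_integral hs32, hexp1]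
  -- x^(2ℓ) * x^(1/2) = x^p for x > 0
  have hmul : ∀ x : ℝ, 0 < x → x^(2*ℓ) * x ^ ((1:ℝ)/2) = x ^ p := by
    intro x hx
    rw [← Real.rpow_natCast x (2*ℓ), ← Real.rpow_add hx]
    congr 1
    push_cast
    rw [hpdef]
  -- pointwise bounds
  have hpt : ∀ ζ ∈ Set.Ioi (0:ℝ), c' * G ζ ≤ F ζ ∧ F ζ ≤ (c' * Real.exp (4*κ)) * G (ζ + 4*κ) := by
    intro ζ hζ
    have hζ0 : (0:ℝ) < ζ := hζ
    set z : ℝ := 1 + ζ / (2 * κ) with hzdef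
    have hzm : z - 1 = ζ / (2*κ) := by rw [hzdef]; ring
    have hzp : z + 1 = (ζ + 4*κ) / (2*κ) := by rw [hzdef]; field_simp; ring
    have hz1 : 1 < z := by
      rw [hzdef]; have : (0:ℝ) < ζ/(2*κ) := by positivity
      linarith
    have pb := point_bounds ℓ m' hm hz1
    have hzm0 : (0:ℝ) ≤ z - 1 := by linarith
    have h0 : (0:ℝ) ≤ Dc ℓ m' * (z-1)^ℓ := mul_nonneg hDc (pow_nonneg hzm0 _)
    have hrw : ∀ w : ℝ, (Dc ℓ m' * ((w:ℝ)/(2*κ))^ℓ)^2 = c' * w^(2*ℓ) := by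
      intro w
      rw [hc'def, div_pow, mul_pow, div_pow, ← pow_mul, ← pow_mul, mul_comm ℓ 2]
      ring
    have hexpnn : (0:ℝ) ≤ Real.exp (-ζ) := (Real.exp_pos _).le
    have hrnn : (0:ℝ) ≤ ζ ^ ((1:ℝ)/2) := Real.rpow_nonneg hζ0.le _
    constructor
    · have hsq : (Dc ℓ m' * (z-1)^ℓ)^2 ≤ (gammaCoeff ℓ m' * legPZ ℓ m' z)^2 :=
        pow_le_pow_left₀ h0 pb.1 2
      have : (Dc ℓ m' * (z-1)^ℓ)^2 * ζ ^ ((1:ℝ)/2) * Real.exp (-ζ) ≤ F ζ := by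
        rw [hFdef]
        exact mul_le_mul_of_nonneg_right (mul_le_mul_of_nonneg_right hsq hrnn) hexpnn
      refine le_trans (le_of_eq ?_) this
      rw [hzm, hrw ζ, hGdef]
      simp only
      rw [← hmul ζ hζ0]; ring
    · have hγP0 : (0:ℝ) ≤ gammaCoeff ℓ m' * legPZ ℓ m' z := h0.trans pb.1
      have hsq : (gammaCoeff ℓ m' * legPZ ℓ m' z)^2 ≤ (Dc ℓ m' * (z+1)^ℓ)^2 :=
        pow_le_pow_left₀ hγP0 pb.2 2
      have step1 : F ζ ≤ (Dc ℓ m' * (z+1)^ℓ)^2 * ζ ^ ((1:ℝ)/2) * Real.exp (-ζ) := by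
        rw [hFdef]
        exact mul_le_mul_of_nonneg_right (mul_le_mul_of_nonneg_right hsq hrnn) hexpnn
      refine step1.trans ?_
      rw [hzp, hrw (ζ + 4*κ)]
      have h4 : (0:ℝ) < ζ + 4*κ := by linarith
      have step2 : ζ ^ ((1:ℝ)/2) ≤ (ζ + 4*κ) ^ ((1:ℝ)/2) :=
        Real.rpow_le_rpow hζ0.le (by linarith) (by norm_num)
      have hc2 : (0:ℝ) ≤ c' * (ζ + 4*κ)^(2*ℓ) := by positivity
      calc c' * (ζ + 4*κ)^(2*ℓ) * ζ ^ ((1:ℝ)/2) * Real.exp (-ζ)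
          ≤ c' * (ζ + 4*κ)^(2*ℓ) * (ζ + 4*κ) ^ ((1:ℝ)/2) * Real.exp (-ζ) :=
            mul_le_mul_of_nonneg_right (mul_le_mul_of_nonneg_left step2 hc2) hexpnn
        _ = (c' * Real.exp (4*κ)) * G (ζ + 4*κ) := by
            rw [hGdef]
            simp only
            rw [← hmul _ h4,
              show Real.exp (-ζ) = Real.exp (4*κ) * Real.exp (-(ζ + 4*κ)) by
                rw [← Real.exp_add]; congr 1; ring]
            ring
    -- end pointwise
  have hGi4 : IntegrableOn G (Set.Ioi (4*κ)) :=
    hGi.mono_set (Set.Ioi_subset_Ioi (by positivity))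
  have hUi : IntegrableOn (fun ζ => (c' * Real.exp (4*κ)) * G (ζ + 4*κ)) (Set.Ioi (0:ℝ)) :=
    (shift_integrableOn (4*κ) G hGi4).const_mul _
  have hLi : IntegrableOn (fun ζ => c' * G ζ) (Set.Ioi (0:ℝ)) := hGi.const_mul _
  have hFm : AEStronglyMeasurable F (volume.restrict (Set.Ioi (0:ℝ))) :=
    (contF κ hκ ℓ m').aestronglyMeasurable measurableSet_Ioi
  have hFnn : ∀ ζ ∈ Set.Ioi (0:ℝ), 0 ≤ F ζ := by
    intro ζ hζ
    have hζ0 : (0:ℝ) < ζ := hζ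
    rw [hFdef]
    have := Real.rpow_nonneg hζ0.le ((1:ℝ)/2)
    positivity
  have hFi : IntegrableOn F (Set.Ioi (0:ℝ)) := by
    refine Integrable.mono' hUi hFm ?_
    rw [ae_restrict_iff' measurableSet_Ioi]
    filter_upwards with x hx
    rw [Real.norm_eq_abs, abs_of_nonneg (hFnn x hx)]
    exact (hpt x hx).2
  have hkey := const_id κ hκ ℓ m' hm
  rw [← hc'def] at hkey
  constructor
  · rw [hkey, hΓ, ← integral_const_mul]
    exact setIntegral_mono_on hLi hFi measurableSet_Ioi fun x hx => (hpt x hx).1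
  · have step1 : (∫ ζ in Set.Ioi (0:ℝ), F ζ) ≤
        ∫ ζ in Set.Ioi (0:ℝ), (c' * Real.exp (4*κ)) * G (ζ + 4*κ) :=
      setIntegral_mono_on hFi hUi measurableSet_Ioi fun x hx => (hpt x hx).2
    have hGnn : 0 ≤ᵐ[volume.restrict (Set.Ioi (0:ℝ))] G := by
      refine (ae_restrict_iff' measurableSet_Ioi).mpr (ae_of_all _ fun x hx => ?_)
      have hx0 : (0:ℝ) < x := hx
      have := Real.rpow_nonneg hx0.le p
      rw [hGdef]; positivity
    have step2 : (∫ ζ in Set.Ioi (0:ℝ), (c' * Real.exp (4*κ)) * G (ζ + 4*κ)) ≤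
        (c' * Real.exp (4*κ)) * ∫ x in Set.Ioi (0:ℝ), G x := by
      rw [integral_const_mul, ← shift_setIntegral (4*κ) G]
      refine mul_le_mul_of_nonneg_left ?_ (by positivity)
      refine setIntegral_mono_set hGi hGnn ?_
      exact HasSubset.Subset.eventuallyLE (Set.Ioi_subset_Ioi (by positivity))
    rw [hkey, hΓ]
    calc (∫ ζ in Set.Ioi (0:ℝ), F ζ) ≤ (c' * Real.exp (4*κ)) * ∫ x in Set.Ioi (0:ℝ), G x :=
          step1.trans step2
      _ = Real.exp (4*κ) * (c' * ∫ x in Set.Ioi (0:ℝ), G x) := by ring
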